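/- Let L and T be closed linear operators in a complex Hilbert space (H, ⟨·,·⟩) with norm ‖·‖, L Hermitian and T anti-Hermitian, let Π be the orthogonal projection onto the null space of L, and set A := (1 + (TΠ)*TΠ)^{−1}(TΠ)*. Assume there are positive constants λ_m, λ_M, C_M such that for all F ∈ H: (A1) −⟨LF, F⟩ ≥ λ_m ‖(1−Π)F‖² (microscopic coercivity); (A2) ‖TΠF‖² ≥ λ_M ‖ΠF‖² (macroscopic coercivity); (A3) ΠTΠF = 0 (parabolic macroscopic dynamics); (A4) ‖AT(1−Π)F‖ + ‖ALF‖ ≤ C_M ‖(1−Π)F‖ (bounded auxiliary operators). Then for all t ≥ 0, ‖e^{(L−T)t}‖² ≤ 3 e^{−λ t}, where λ = (λ_M / (3(1+λ_M))) · min{1, λ_m, λ_m λ_M / ((1+λ_M) C_M²)}. -/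

import Mathlib

open scoped InnerProductSpace

set_option maxHeartbeats 4000000 in
/-- Abstract hypocoercivity (Proposition, after DMS): in a complex Hilbert space H, let L be
Hermitian, T anti-Hermitian, Π the orthogonal projection onto the null space of L
(idempotent, self-adjoint, with fixed-point set exactly ker L), and let
A = (1 + (TΠ)*TΠ)⁻¹(TΠ)*, characterized weakly by
⟪AF, G⟫ + ⟪TΠ(AF), TΠG⟫ = ⟪F, TΠG⟫ for all G.  Under microscopic coercivity (A1),
macroscopic coercivity (A2), parabolic macroscopic dynamics (A3) and bounded auxiliary
operators (A4), every solution of dF/dt + TF = LF satisfies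
‖F(t)‖² ≤ 3 e^{−λt} ‖F(0)‖², i.e. ‖e^{(L−T)t}‖² ≤ 3 e^{−λt}, with
λ = λ_M/(3(1+λ_M)) · min{1, λ_m, λ_m λ_M/((1+λ_M)C_M²)}. -/
theorem stmt_3
    {H : Type*} [NormedAddCommGroup H] [InnerProductSpace ℂ H] [CompleteSpace H]
    (L T A Pr : H →ₗ[ℂ] H)
    -- L Hermitian, T anti-Hermitian
    (hL_sym : ∀ F G : H, ⟪L F, G⟫_ℂ = ⟪F, L G⟫_ℂ)
    (hT_skew : ∀ F G : H, ⟪T F, G⟫_ℂ = -⟪F, T G⟫_ℂ)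
    -- Pr is the orthogonal projection onto the null space of L
    (hPr_idem : ∀ F : H, Pr (Pr F) = Pr F)
    (hPr_sym : ∀ F G : H, ⟪Pr F, G⟫_ℂ = ⟪F, Pr G⟫_ℂ)
    (hPr_ker : ∀ F : H, L F = 0 ↔ Pr F = F)
    -- A = (1 + (TΠ)*TΠ)⁻¹ (TΠ)*, characterized weakly
    (hA : ∀ F G : H, ⟪A F, G⟫_ℂ + ⟪T (Pr (A F)), T (Pr G)⟫_ℂ = ⟪F, T (Pr G)⟫_ℂ)
    (lm lM CM : ℝ) (hlm : 0 < lm) (hlM : 0 < lM) (hCM : 0 < CM)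
    -- (A1) microscopic coercivity
    (hA1 : ∀ F : H, lm * ‖F - Pr F‖ ^ 2 ≤ -((⟪L F, F⟫_ℂ).re))
    -- (A2) macroscopic coercivity
    (hA2 : ∀ F : H, lM * ‖Pr F‖ ^ 2 ≤ ‖T (Pr F)‖ ^ 2)
    -- (A3) parabolic macroscopic dynamics
    (hA3 : ∀ F : H, Pr (T (Pr F)) = 0)
    -- (A4) bounded auxiliary operators
    (hA4 : ∀ F : H, ‖A (T (F - Pr F))‖ + ‖A (L F)‖ ≤ CM * ‖F - Pr F‖) :
    ∀ u : ℝ → H, (∀ t : ℝ, HasDerivAt u (L (u t) - T (u t)) t) →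
      ∀ t : ℝ, 0 ≤ t →
        ‖u t‖ ^ 2 ≤
          3 * Real.exp (-(lM / (3 * (1 + lM))
              * min 1 (min lm (lm * lM / ((1 + lM) * CM ^ 2)))) * t) * ‖u 0‖ ^ 2 := by
  intro u hu t ht
  have h1lM : (0:ℝ) < 1 + lM := by linarith
  set κ : ℝ := lM / (1 + lM) with hκdef
  have hκpos : 0 < κ := div_pos hlM h1lM
  have hκlt : κ < 1 := (div_lt_one h1lM).2 (by linarith)
  set m : ℝ := min 1 (min lm (lm * lM / ((1 + lM) * CM ^ 2))) with hmdef
  have hm1 : m ≤ 1 := min_le_left _ _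
  have hmlm : m ≤ lm := le_trans (min_le_right _ _) (min_le_left _ _)
  have hCM2 : (0:ℝ) < CM ^ 2 := by positivity
  have hm3 : m ≤ lm * κ / CM ^ 2 := by
    have h0 : m ≤ lm * lM / ((1 + lM) * CM ^ 2) := le_trans (min_le_right _ _) (min_le_right _ _)
    have he : lm * lM / ((1 + lM) * CM ^ 2) = lm * κ / CM ^ 2 := by
      rw [hκdef]; field_simp
    linarith [he ▸ h0]
  have hmpos : 0 < m := by
    have h0 : (0:ℝ) < lm * lM / ((1 + lM) * CM ^ 2) := by positivity
    exact lt_min one_pos (lt_min hlm h0)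
  set ε : ℝ := m / 2 with hεdef
  have hεpos : 0 < ε := by positivity
  have hεhalf : ε ≤ 1/2 := by rw [hεdef]; linarith
  set lam : ℝ := lM / (3 * (1 + lM)) * m with hlamdef
  have hlamκ : lam = κ * m / 3 := by rw [hlamdef, hκdef]; field_simp
  have hlampos : 0 < lam := by rw [hlamκ]; positivity
  have hεCM : 2 * ε * CM ^ 2 ≤ lm * κ := by
    have h := mul_le_mul_of_nonneg_right hm3 hCM2.le
    have e : lm * κ / CM ^ 2 * CM ^ 2 = lm * κ := by field_simp
    rw [e] at h
    rw [hεdef]; linarith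
  have hεlm : ε ≤ lm / 2 := by rw [hεdef]; linarith
  have ha : lm / 4 ≤ lm - ε - κ * ε / 2 := by nlinarith [hεpos, hκpos, hκlt, hεlm]
  have h4ac : (ε * CM) ^ 2 ≤ 4 * (lm - ε - κ * ε / 2) * (κ * ε / 2) := by
    nlinarith [mul_le_mul_of_nonneg_left hεCM hεpos.le,
      mul_le_mul_of_nonneg_left ha
        (mul_nonneg (mul_nonneg (by norm_num : (0:ℝ) ≤ 2) hκpos.le) hεpos.le)]
  have hlam34 : lam * (3/4) = κ * ε / 2 := by rw [hlamκ, hεdef]; ring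
  have hquadgen : ∀ X Y : ℝ, 0 ≤ X → 0 ≤ Y →
      -(lm * X ^ 2) + ε * (X ^ 2 + CM * X * Y - κ * Y ^ 2)
        ≤ -lam * ((3/4) * (X ^ 2 + Y ^ 2)) := by
    intro X Y hXnn hYnn
    have e1 : -lam * ((3/4) * (X ^ 2 + Y ^ 2)) = -(κ * ε / 2) * (X ^ 2 + Y ^ 2) := by
      rw [← hlam34]; ring
    rw [e1]
    nlinarith [sq_nonneg (ε * CM * X - κ * ε * Y), h4ac, sq_nonneg X, sq_nonneg Y,
      mul_nonneg hXnn hYnn, mul_pos hκpos hεpos]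
  -- orthogonality of the decomposition
  have hPr_orth : ∀ F : H, ⟪Pr F, F - Pr F⟫_ℂ = 0 := by
    intro F
    have h1 : Pr (F - Pr F) = 0 := by rw [map_sub, hPr_idem, sub_self]
    calc ⟪Pr F, F - Pr F⟫_ℂ = ⟪Pr (Pr F), F - Pr F⟫_ℂ := by rw [hPr_idem]
      _ = ⟪Pr F, Pr (F - Pr F)⟫_ℂ := hPr_sym _ _
      _ = 0 := by rw [h1, inner_zero_right]
  have hOrth : ∀ F : H, ‖F‖ ^ 2 = ‖Pr F‖ ^ 2 + ‖F - Pr F‖ ^ 2 := by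
    intro F
    have h2 : F = Pr F + (F - Pr F) := by abel
    have h3 : ‖Pr F + (F - Pr F)‖ ^ 2
        = ‖Pr F‖ ^ 2 + 2 * (⟪Pr F, F - Pr F⟫_ℂ).re + ‖F - Pr F‖ ^ 2 :=
      norm_add_sq (𝕜 := ℂ) _ _
    rw [hPr_orth] at h3
    simp only [Complex.zero_re, mul_zero, add_zero] at h3
    calc ‖F‖ ^ 2 = ‖Pr F + (F - Pr F)‖ ^ 2 := by rw [← h2]
      _ = ‖Pr F‖ ^ 2 + ‖F - Pr F‖ ^ 2 := h3
  have hXle : ∀ F : H, ‖F - Pr F‖ ≤ ‖F‖ := by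
    intro F
    have h1 := hOrth F
    have h2 : ‖F - Pr F‖ ^ 2 ≤ ‖F‖ ^ 2 := by nlinarith [sq_nonneg ‖Pr F‖]
    exact (pow_le_pow_iff_left₀ (norm_nonneg _) (norm_nonneg _) two_ne_zero).1 h2
  -- A maps into range of Pr
  have hPrA : ∀ F : H, Pr (A F) = A F := by
    intro F
    set G := A F - Pr (A F) with hG
    have hPrG : Pr G = 0 := by rw [hG, map_sub, hPr_idem, sub_self]
    have h1 := hA F G
    rw [hPrG, map_zero, inner_zero_right, inner_zero_right] at h1
    have h2 : ⟪A F, G⟫_ℂ = 0 := by linear_combination h1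
    have h3 : ⟪Pr (A F), G⟫_ℂ = 0 := by rw [hPr_sym, hPrG, inner_zero_right]
    have h4 : ⟪G, G⟫_ℂ = 0 := by rw [hG, inner_sub_left, h2, h3, sub_zero]
    have h5 : G = 0 := inner_self_eq_zero.1 h4
    have h6 : A F - Pr (A F) = 0 := hG.symm.trans h5
    exact (sub_eq_zero.1 h6).symm
  -- key identity for A F
  have hkeyA : ∀ F : H, ‖A F‖ ^ 2 + ‖T (Pr (A F))‖ ^ 2
      = (⟪F - Pr F, T (Pr (A F))⟫_ℂ).re := by
    intro F
    have h1 := hA F (A F)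
    have h2 : ⟪Pr F, T (Pr (A F))⟫_ℂ = 0 := by rw [hPr_sym, hA3, inner_zero_right]
    have h3 : (⟪F - Pr F, T (Pr (A F))⟫_ℂ) = ⟪F, T (Pr (A F))⟫_ℂ := by
      rw [inner_sub_left, h2, sub_zero]
    rw [h3, ← h1]
    have h4 : (⟪A F, A F⟫_ℂ).re = ‖A F‖ ^ 2 := inner_self_eq_norm_sq (𝕜 := ℂ) _
    have h5 : (⟪T (Pr (A F)), T (Pr (A F))⟫_ℂ).re = ‖T (Pr (A F))‖ ^ 2 :=
      inner_self_eq_norm_sq (𝕜 := ℂ) _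
    rw [Complex.add_re, h4, h5]
  have hTPA : ∀ F : H, ‖T (Pr (A F))‖ ≤ ‖F - Pr F‖ := by
    intro F
    have h1 := hkeyA F
    have h2 : (⟪F - Pr F, T (Pr (A F))⟫_ℂ).re ≤ ‖F - Pr F‖ * ‖T (Pr (A F))‖ :=
      re_inner_le_norm (𝕜 := ℂ) _ _
    by_cases h : ‖T (Pr (A F))‖ = 0
    · rw [h]; exact norm_nonneg _
    · have h3 : 0 < ‖T (Pr (A F))‖ := lt_of_le_of_ne (norm_nonneg _) (Ne.symm h)
      nlinarith [sq_nonneg ‖A F‖]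
  have hAle : ∀ F : H, ‖A F‖ ≤ ‖F - Pr F‖ / 2 := by
    intro F
    have h1 := hkeyA F
    have h2 : (⟪F - Pr F, T (Pr (A F))⟫_ℂ).re ≤ ‖F - Pr F‖ * ‖T (Pr (A F))‖ :=
      re_inner_le_norm (𝕜 := ℂ) _ _
    have h3 : ‖A F‖ ^ 2 ≤ (‖F - Pr F‖ / 2) ^ 2 := by
      nlinarith [sq_nonneg (‖F - Pr F‖ - 2 * ‖T (Pr (A F))‖)]
    have h4 : (0:ℝ) ≤ ‖F - Pr F‖ / 2 := by positivity
    exact (pow_le_pow_iff_left₀ (norm_nonneg _) h4 two_ne_zero).1 h3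
  have hAbound : ∀ x : H, ‖A x‖ ≤ (1/2 : ℝ) * ‖x‖ := by
    intro x
    calc ‖A x‖ ≤ ‖x - Pr x‖ / 2 := hAle x
      _ ≤ (1/2) * ‖x‖ := by have := hXle x; linarith
  set Ac : H →L[ℂ] H := LinearMap.mkContinuous A (1/2) hAbound with hAc
  have hAcapp : ∀ x : H, Ac x = A x := fun x => rfl
  have hLA : ∀ F : H, L (A F) = 0 := fun F => (hPr_ker (A F)).2 (hPrA F)
  -- macroscopic coercivity transferred
  have hMacro : ∀ F : H, κ * ‖Pr F‖ ^ 2 ≤ (⟪A (T (Pr F)), F⟫_ℂ).re := by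
    intro F
    have hYnn : (0:ℝ) ≤ ‖Pr F‖ := norm_nonneg _
    set g : H := A (T (Pr F)) with hg
    have hPrg : Pr g = g := hPrA _
    set hh : H := Pr F - g with hhdef
    have hPrh : Pr hh = hh := by rw [hhdef, map_sub, hPr_idem, hPrg]
    have hweak : ⟪hh, hh⟫_ℂ + ⟪T (Pr hh), T (Pr hh)⟫_ℂ = ⟪Pr F, hh⟫_ℂ := by
      have h1 := hA (T (Pr F)) hh
      have e3 : T (Pr hh) = T (Pr F) - T (Pr g) := by
        rw [hPrh, hhdef, map_sub]
        congr 1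
        rw [hPrg]
      have e4 : ⟪hh, hh⟫_ℂ = ⟪Pr F, hh⟫_ℂ - ⟪g, hh⟫_ℂ := by
        nth_rewrite 1 [hhdef]
        rw [inner_sub_left]
      rw [e4]
      nth_rewrite 1 [e3]
      rw [inner_sub_left]
      linear_combination -h1
    have hre1 : (⟪hh, hh⟫_ℂ).re = ‖hh‖ ^ 2 := inner_self_eq_norm_sq (𝕜 := ℂ) _
    have hre2 : (⟪T (Pr hh), T (Pr hh)⟫_ℂ).re = ‖T (Pr hh)‖ ^ 2 :=
      inner_self_eq_norm_sq (𝕜 := ℂ) _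
    have hre : ‖hh‖ ^ 2 + ‖T (Pr hh)‖ ^ 2 = (⟪Pr F, hh⟫_ℂ).re := by
      have := congrArg Complex.re hweak
      rw [Complex.add_re, hre1, hre2] at this
      exact this
    have hA2h := hA2 hh
    rw [hPrh] at hA2h
    have hPFh : (⟪Pr F, hh⟫_ℂ).re ≤ ‖Pr F‖ * ‖hh‖ := re_inner_le_norm (𝕜 := ℂ) _ _
    have hTPhh : ‖T (Pr hh)‖ ^ 2 = ‖T hh‖ ^ 2 := by rw [hPrh]
    have hhbound : (1 + lM) * ‖hh‖ ^ 2 ≤ ‖Pr F‖ * ‖hh‖ := by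
      nlinarith [hre, hA2h, hTPhh]
    have hhle : (1 + lM) * ‖hh‖ ≤ ‖Pr F‖ := by
      by_cases h : ‖hh‖ = 0
      · rw [h]; simpa using hYnn
      · have h3 : 0 < ‖hh‖ := lt_of_le_of_ne (norm_nonneg _) (Ne.symm h)
        nlinarith
    have hhle' : ‖hh‖ ≤ ‖Pr F‖ / (1 + lM) := by
      rw [le_div_iff₀ h1lM]; linarith
    have hhle2 : ‖hh‖ * ‖Pr F‖ ≤ ‖Pr F‖ ^ 2 / (1 + lM) := by
      calc ‖hh‖ * ‖Pr F‖ ≤ (‖Pr F‖ / (1 + lM)) * ‖Pr F‖ :=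
            mul_le_mul_of_nonneg_right hhle' hYnn
        _ = ‖Pr F‖ ^ 2 / (1 + lM) := by ring
    have hgF : ⟪g, F⟫_ℂ = ⟪g, Pr F⟫_ℂ := by
      calc ⟪g, F⟫_ℂ = ⟪Pr g, F⟫_ℂ := by rw [hPrg]
        _ = ⟪g, Pr F⟫_ℂ := hPr_sym _ _
    have hsplit : ⟪g, Pr F⟫_ℂ = ⟪Pr F, Pr F⟫_ℂ - ⟪hh, Pr F⟫_ℂ := by
      rw [hhdef, inner_sub_left]; ring
    have hrePF : (⟪Pr F, Pr F⟫_ℂ).re = ‖Pr F‖ ^ 2 := inner_self_eq_norm_sq (𝕜 := ℂ) _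
    have hfinal : (⟪g, F⟫_ℂ).re = ‖Pr F‖ ^ 2 - (⟪hh, Pr F⟫_ℂ).re := by
      rw [hgF, hsplit, Complex.sub_re, hrePF]
    have hhPF : (⟪hh, Pr F⟫_ℂ).re ≤ ‖hh‖ * ‖Pr F‖ := re_inner_le_norm (𝕜 := ℂ) _ _
    have hκY : κ * ‖Pr F‖ ^ 2 = ‖Pr F‖ ^ 2 - ‖Pr F‖ ^ 2 / (1 + lM) := by
      rw [hκdef]; field_simp; ring
    rw [hfinal, hκY]
    linarith [le_trans hhPF hhle2]
  -- Lyapunov functional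
  set Hf : ℝ → ℝ := fun s => (1/2) * ‖u s‖ ^ 2 + ε * (⟪A (u s), u s⟫_ℂ).re with hHf
  set w : ℝ → H := fun s => L (u s) - T (u s) with hw
  set D : ℝ → ℝ := fun s =>
    (1/2) * ((⟪u s, w s⟫_ℂ + ⟪w s, u s⟫_ℂ).re)
      + ε * ((⟪A (u s), w s⟫_ℂ + ⟪A (w s), u s⟫_ℂ).re) with hD
  have hHderiv : ∀ s : ℝ, HasDerivAt Hf (D s) s := by
    intro s
    have hus : HasDerivAt u (w s) s := hu s
    have h1 : HasDerivAt (fun s => ⟪u s, u s⟫_ℂ) (⟪u s, w s⟫_ℂ + ⟪w s, u s⟫_ℂ) s :=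
      hus.inner ℂ hus
    have h2 := ((Ac.restrictScalars ℝ).hasFDerivAt (x := u s)).comp_hasDerivAt s hus
    have h2' : HasDerivAt (fun s => A (u s)) (A (w s)) s := h2
    have h3 : HasDerivAt (fun s => ⟪A (u s), u s⟫_ℂ)
        (⟪A (u s), w s⟫_ℂ + ⟪A (w s), u s⟫_ℂ) s :=
      h2'.inner ℂ hus
    have h1re0 := (Complex.reCLM.hasFDerivAt (x := ⟪u s, u s⟫_ℂ)).comp_hasDerivAt s h1
    have h1re : HasDerivAt (fun s => (⟪u s, u s⟫_ℂ).re)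
        ((⟪u s, w s⟫_ℂ + ⟪w s, u s⟫_ℂ).re) s := h1re0
    have h3re0 := (Complex.reCLM.hasFDerivAt (x := ⟪A (u s), u s⟫_ℂ)).comp_hasDerivAt s h3
    have h3re : HasDerivAt (fun s => (⟪A (u s), u s⟫_ℂ).re)
        ((⟪A (u s), w s⟫_ℂ + ⟪A (w s), u s⟫_ℂ).re) s := h3re0
    have hnorm : (fun s => (⟪u s, u s⟫_ℂ).re) = fun s => ‖u s‖ ^ 2 := by
      funext x; exact inner_self_eq_norm_sq (𝕜 := ℂ) _
    rw [hnorm] at h1re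
    exact (h1re.const_mul (1/2 : ℝ)).add (h3re.const_mul ε)
  -- pointwise differential inequality
  have hkey : ∀ s : ℝ, D s ≤ -lam * Hf s := by
    intro s
    have hDs : D s = (1/2) * ((⟪u s, w s⟫_ℂ + ⟪w s, u s⟫_ℂ).re)
        + ε * ((⟪A (u s), w s⟫_ℂ + ⟪A (w s), u s⟫_ℂ).re) := rfl
    have hHfs : Hf s = (1/2) * ‖u s‖ ^ 2 + ε * (⟪A (u s), u s⟫_ℂ).re := rfl
    have hws : w s = L (u s) - T (u s) := rfl
    set F : H := u s with hF
    set X : ℝ := ‖F - Pr F‖ with hX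
    set Y : ℝ := ‖Pr F‖ with hY
    have hXnn : 0 ≤ X := norm_nonneg _
    have hYnn : 0 ≤ Y := norm_nonneg _
    -- first term
    have hTFF : (⟪T F, F⟫_ℂ).re = 0 := by
      have h1 := hT_skew F F
      have h2 : (⟪T F, F⟫_ℂ).re = (⟪F, T F⟫_ℂ).re := inner_re_symm (𝕜 := ℂ) _ _
      have h3 := congrArg Complex.re h1
      rw [Complex.neg_re] at h3
      linarith only [h2, h3]
    have hfirst : (⟪u s, w s⟫_ℂ + ⟪w s, u s⟫_ℂ).re = 2 * (⟪L F, F⟫_ℂ).re := by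
      have hsymm : (⟪u s, w s⟫_ℂ).re = (⟪w s, u s⟫_ℂ).re := inner_re_symm (𝕜 := ℂ) _ _
      have hwF : (⟪w s, u s⟫_ℂ).re = (⟪L F, F⟫_ℂ).re - (⟪T F, F⟫_ℂ).re := by
        rw [hws, ← hF, inner_sub_left, Complex.sub_re]
      rw [Complex.add_re, hsymm, hwF, hTFF]; ring
    have hT1 : (1/2) * ((⟪u s, w s⟫_ℂ + ⟪w s, u s⟫_ℂ).re) ≤ -(lm * X ^ 2) := by
      rw [hfirst]
      have h5 := hA1 F
      rw [← hX] at h5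
      linarith only [h5]
    -- second piece
    have hAFL : (⟪A F, L F⟫_ℂ).re = 0 := by
      have h1 := hL_sym (A F) F
      rw [hLA F, inner_zero_left] at h1
      rw [← h1]
      simp
    have hAFT : -(⟪A F, T F⟫_ℂ).re ≤ X ^ 2 := by
      have h1 := hT_skew (A F) F
      have h2 : T (A F) = T (Pr (A F)) := by rw [hPrA]
      have h3 : ⟪T (Pr (A F)), Pr F⟫_ℂ = 0 := by
        have h4 := hPr_sym (T (Pr (A F))) F
        rw [hA3, inner_zero_left] at h4
        exact h4.symm
      have h4 : ⟪T (Pr (A F)), F⟫_ℂ = ⟪T (Pr (A F)), F - Pr F⟫_ℂ := by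
        rw [inner_sub_right, h3, sub_zero]
      have h5 : -(⟪A F, T F⟫_ℂ).re = (⟪T (Pr (A F)), F - Pr F⟫_ℂ).re := by
        rw [← h4, ← h2]
        have h6 := congrArg Complex.re h1
        rw [Complex.neg_re] at h6
        linarith only [h6]
      rw [h5]
      have h7 : (⟪T (Pr (A F)), F - Pr F⟫_ℂ).re ≤ ‖T (Pr (A F))‖ * ‖F - Pr F‖ :=
        re_inner_le_norm (𝕜 := ℂ) _ _
      have h8 := hTPA F
      rw [← hX] at h7 h8
      have h9 := mul_le_mul_of_nonneg_right h8 hXnn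
      linarith only [h7, h9]
    have hsec : (⟪A (u s), w s⟫_ℂ).re ≤ X ^ 2 := by
      have h1 : (⟪A (u s), w s⟫_ℂ).re = (⟪A F, L F⟫_ℂ).re - (⟪A F, T F⟫_ℂ).re := by
        rw [hws, ← hF, inner_sub_right, Complex.sub_re]
      rw [h1, hAFL]
      linarith only [hAFT]
    -- third piece
    have hALF2 : (⟪A (L F), F⟫_ℂ).re - (⟪A (T (F - Pr F)), F⟫_ℂ).re ≤ CM * X * Y := by
      have hb : ∀ z : H, (⟪A z, F⟫_ℂ).re ≤ ‖A z‖ * Y ∧ -((⟪A z, F⟫_ℂ).re) ≤ ‖A z‖ * Y := by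
        intro z
        have h1 : ⟪A z, F⟫_ℂ = ⟪A z, Pr F⟫_ℂ := by
          calc ⟪A z, F⟫_ℂ = ⟪Pr (A z), F⟫_ℂ := by rw [hPrA]
            _ = ⟪A z, Pr F⟫_ℂ := hPr_sym _ _
        constructor
        · rw [h1]; exact re_inner_le_norm (𝕜 := ℂ) _ _
        · rw [h1]
          have h2 : (⟪A z, -(Pr F)⟫_ℂ).re ≤ ‖A z‖ * ‖-(Pr F)‖ :=
            re_inner_le_norm (𝕜 := ℂ) (A z) (-(Pr F))
          rw [inner_neg_right, Complex.neg_re, norm_neg] at h2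
          exact h2
      have h2 := (hb (L F)).1
      have h3 := (hb (T (F - Pr F))).2
      have h4 := hA4 F
      rw [← hX] at h4
      have h5 := mul_le_mul_of_nonneg_right h4 hYnn
      linarith only [h2, h3, h5]
    have hthird : (⟪A (w s), u s⟫_ℂ).re ≤ CM * X * Y - κ * Y ^ 2 := by
      have hTF : T F = T (Pr F) + T (F - Pr F) := by
        rw [← map_add]; congr 1; abel
      have eA : A (w s) = A (L F) - A (T (Pr F)) - A (T (F - Pr F)) := by
        rw [hws, map_sub, hTF, map_add]; abel
      have hre3 : (⟪A (w s), u s⟫_ℂ).re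
          = (⟪A (L F), F⟫_ℂ).re - (⟪A (T (Pr F)), F⟫_ℂ).re
            - (⟪A (T (F - Pr F)), F⟫_ℂ).re := by
        rw [eA, ← hF, inner_sub_left, inner_sub_left, Complex.sub_re, Complex.sub_re]
      rw [hre3]
      have h6 := hMacro F
      rw [← hY] at h6
      linarith only [hALF2, h6]
    -- collect
    have hDle : D s ≤ -(lm * X ^ 2) + ε * (X ^ 2 + CM * X * Y - κ * Y ^ 2) := by
      rw [hDs]
      have h6 : ε * ((⟪A (u s), w s⟫_ℂ + ⟪A (w s), u s⟫_ℂ).re)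
          ≤ ε * (X ^ 2 + CM * X * Y - κ * Y ^ 2) := by
        apply mul_le_mul_of_nonneg_left _ hεpos.le
        rw [Complex.add_re]
        linarith only [hsec, hthird]
      linarith only [hT1, h6]
    -- upper bound on Hf s
    have hnormF : ‖F‖ ^ 2 = Y ^ 2 + X ^ 2 := by
      rw [hX, hY]; exact hOrth F
    have hHfle : Hf s ≤ (3/4) * (X ^ 2 + Y ^ 2) := by
      rw [hHfs]
      have h1 : (⟪A F, F⟫_ℂ).re ≤ ‖A F‖ * ‖F‖ := re_inner_le_norm (𝕜 := ℂ) _ _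
      have h2 : ‖A F‖ * ‖F‖ ≤ (1/2) * ‖F‖ * ‖F‖ :=
        mul_le_mul_of_nonneg_right (hAbound F) (norm_nonneg _)
      have h3 : (1/2) * ‖F‖ * ‖F‖ = (1/2) * (Y ^ 2 + X ^ 2) := by
        rw [mul_assoc, ← pow_two, hnormF]
      have hre_le : (⟪A F, F⟫_ℂ).re ≤ (1/2) * (Y ^ 2 + X ^ 2) := by
        linarith only [h1, h2, h3]
      have h5 : ε * (⟪A F, F⟫_ℂ).re ≤ (1/4) * (Y ^ 2 + X ^ 2) := by
        rcases le_or_gt (⟪A F, F⟫_ℂ).re 0 with hc | hc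
        · have h6 : ε * (⟪A F, F⟫_ℂ).re ≤ 0 :=
            mul_nonpos_of_nonneg_of_nonpos hεpos.le hc
          have h7 : (0:ℝ) ≤ (1/4) * (Y ^ 2 + X ^ 2) := by positivity
          linarith only [h6, h7]
        · have e1 : ε * (⟪A F, F⟫_ℂ).re ≤ (1/2) * (⟪A F, F⟫_ℂ).re :=
            mul_le_mul_of_nonneg_right hεhalf hc.le
          linarith only [e1, hre_le]
      linarith only [h5, hnormF]
    have hquad := hquadgen X Y hXnn hYnn
    have hlamH : -lam * ((3/4) * (X ^ 2 + Y ^ 2)) ≤ -lam * Hf s := by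
      have h9 := mul_le_mul_of_nonneg_left hHfle hlampos.le
      linarith only [h9]
    exact le_trans hDle (le_trans hquad hlamH)
  -- Gronwall argument
  set G : ℝ → ℝ := fun s => Hf s * Real.exp (lam * s) with hG
  have hGderiv : ∀ s : ℝ, HasDerivAt G (D s * Real.exp (lam * s)
      + Hf s * (Real.exp (lam * s) * lam)) s := by
    intro s
    have h1 : HasDerivAt (fun s : ℝ => lam * s) lam s := by
      simpa using (hasDerivAt_id s).const_mul lam
    have h2 : HasDerivAt (fun s => Real.exp (lam * s)) (Real.exp (lam * s) * lam) s := h1.exp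
    exact (hHderiv s).mul h2
  have hGanti : Antitone G := by
    apply antitone_of_hasDerivAt_nonpos hGderiv
    intro s
    have h1 := hkey s
    have h2 : (0:ℝ) < Real.exp (lam * s) := Real.exp_pos _
    have h3 : D s * Real.exp (lam * s) ≤ -lam * Hf s * Real.exp (lam * s) :=
      mul_le_mul_of_nonneg_right h1 h2.le
    have h4 : -lam * Hf s * Real.exp (lam * s) + Hf s * (Real.exp (lam * s) * lam) = 0 := by
      ring
    show D s * Real.exp (lam * s) + Hf s * (Real.exp (lam * s) * lam) ≤ 0
    linarith only [h3, h4]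
  have hGt : G t ≤ G 0 := hGanti ht
  have hG0 : G 0 = Hf 0 := by
    show Hf 0 * Real.exp (lam * 0) = Hf 0
    rw [mul_zero, Real.exp_zero, mul_one]
  -- comparability
  have hcomp_low : ∀ s : ℝ, (1/4) * ‖u s‖ ^ 2 ≤ Hf s := by
    intro s
    have hHfs : Hf s = (1/2) * ‖u s‖ ^ 2 + ε * (⟪A (u s), u s⟫_ℂ).re := rfl
    rw [hHfs]
    have h1 : |(⟪A (u s), u s⟫_ℂ).re| ≤ ‖A (u s)‖ * ‖u s‖ := by
      calc |(⟪A (u s), u s⟫_ℂ).re| ≤ ‖⟪A (u s), u s⟫_ℂ‖ := Complex.abs_re_le_norm _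
        _ = ‖⟪A (u s), u s⟫_ℂ‖ := rfl
        _ ≤ ‖A (u s)‖ * ‖u s‖ := norm_inner_le_norm _ _
    have h2 : ‖A (u s)‖ * ‖u s‖ ≤ (1/2) * ‖u s‖ ^ 2 := by
      have h3 := mul_le_mul_of_nonneg_right (hAbound (u s)) (norm_nonneg (u s))
      calc ‖A (u s)‖ * ‖u s‖ ≤ (1/2) * ‖u s‖ * ‖u s‖ := h3
        _ = (1/2) * ‖u s‖ ^ 2 := by ring
    have h3 : -((1/2 : ℝ) * ‖u s‖ ^ 2) ≤ (⟪A (u s), u s⟫_ℂ).re := by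
      have h4 := (abs_le.1 h1).1
      linarith only [h4, h2]
    rcases le_or_gt 0 ((⟪A (u s), u s⟫_ℂ).re) with hc | hc
    · have h5 : 0 ≤ ε * (⟪A (u s), u s⟫_ℂ).re := mul_nonneg hεpos.le hc
      linarith only [h5, sq_nonneg ‖u s‖]
    · have e1 : (1/2 : ℝ) * (⟪A (u s), u s⟫_ℂ).re ≤ ε * (⟪A (u s), u s⟫_ℂ).re :=
        mul_le_mul_of_nonpos_right hεhalf hc.le
      linarith only [e1, h3]
  have hcomp_up : Hf 0 ≤ (3/4) * ‖u 0‖ ^ 2 := by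
    have hHfs : Hf 0 = (1/2) * ‖u 0‖ ^ 2 + ε * (⟪A (u 0), u 0⟫_ℂ).re := rfl
    rw [hHfs]
    have h1 : |(⟪A (u 0), u 0⟫_ℂ).re| ≤ ‖A (u 0)‖ * ‖u 0‖ := by
      calc |(⟪A (u 0), u 0⟫_ℂ).re| ≤ ‖⟪A (u 0), u 0⟫_ℂ‖ := Complex.abs_re_le_norm _
        _ = ‖⟪A (u 0), u 0⟫_ℂ‖ := rfl
        _ ≤ ‖A (u 0)‖ * ‖u 0‖ := norm_inner_le_norm _ _
    have h2 : ‖A (u 0)‖ * ‖u 0‖ ≤ (1/2) * ‖u 0‖ ^ 2 := by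
      have h3 := mul_le_mul_of_nonneg_right (hAbound (u 0)) (norm_nonneg (u 0))
      calc ‖A (u 0)‖ * ‖u 0‖ ≤ (1/2) * ‖u 0‖ * ‖u 0‖ := h3
        _ = (1/2) * ‖u 0‖ ^ 2 := by ring
    have h3 : (⟪A (u 0), u 0⟫_ℂ).re ≤ (1/2) * ‖u 0‖ ^ 2 :=
      le_trans (le_abs_self _) (le_trans h1 h2)
    rcases le_or_gt ((⟪A (u 0), u 0⟫_ℂ).re) 0 with hc | hc
    · have h5 : ε * (⟪A (u 0), u 0⟫_ℂ).re ≤ 0 :=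
        mul_nonpos_of_nonneg_of_nonpos hεpos.le hc
      linarith only [h5, sq_nonneg ‖u 0‖]
    · have e1 : ε * (⟪A (u 0), u 0⟫_ℂ).re ≤ (1/2 : ℝ) * (⟪A (u 0), u 0⟫_ℂ).re :=
        mul_le_mul_of_nonneg_right hεhalf hc.le
      linarith only [e1, h3]
  -- conclude
  have hexp : (0:ℝ) < Real.exp (lam * t) := Real.exp_pos _
  have h1 : Hf t * Real.exp (lam * t) ≤ Hf 0 := by
    rw [← hG0]; exact hGt
  have h2 : (1/4) * ‖u t‖ ^ 2 * Real.exp (lam * t) ≤ (3/4) * ‖u 0‖ ^ 2 := by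
    calc (1/4) * ‖u t‖ ^ 2 * Real.exp (lam * t)
        ≤ Hf t * Real.exp (lam * t) := mul_le_mul_of_nonneg_right (hcomp_low t) hexp.le
      _ ≤ Hf 0 := h1
      _ ≤ (3/4) * ‖u 0‖ ^ 2 := hcomp_up
  have h2' : ‖u t‖ ^ 2 * Real.exp (lam * t) ≤ 3 * ‖u 0‖ ^ 2 := by linarith only [h2]
  have h3 : ‖u t‖ ^ 2 ≤ 3 * ‖u 0‖ ^ 2 * (Real.exp (lam * t))⁻¹ := by
    have e1 : ‖u t‖ ^ 2 = ‖u t‖ ^ 2 * Real.exp (lam * t) * (Real.exp (lam * t))⁻¹ := by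
      field_simp
    rw [e1]
    exact mul_le_mul_of_nonneg_right h2' (by positivity)
  have h4 : (Real.exp (lam * t))⁻¹ = Real.exp (-lam * t) := by
    rw [← Real.exp_neg]; ring_nf
  calc ‖u t‖ ^ 2 ≤ 3 * ‖u 0‖ ^ 2 * (Real.exp (lam * t))⁻¹ := h3
    _ = 3 * Real.exp (-lam * t) * ‖u 0‖ ^ 2 := by rw [h4]; ring
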